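/- Let R be an EM-ring and n ≥ 2 an integer. Then the ring H = R[y]/(y^n), with its Z_n-grading given by H_k = R·y^k for k ∈ Z_n, is an EM-Z_n-graded ring. -/

import Mathlib

open Polynomial

section Aux

variable {R : Type*} [CommRing R] [Nontrivial R] {n : ℕ}

omit [Nontrivial R] in
/-- If `k < n` and `C a * X^k` maps to zero in `R[X]/(X^n)`, then `a = 0`. -/
lemma aux_mk_eq_zero {k : ℕ} (hk : k < n) {a : R}
    (h : Ideal.Quotient.mk (Ideal.span {(X : R[X]) ^ n}) (C a * X ^ k) = 0) : a = 0 := by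
  rw [Ideal.Quotient.eq_zero_iff_mem, Ideal.mem_span_singleton] at h
  obtain ⟨Q, hQ⟩ := h
  have h2 : a = (X ^ n * Q).coeff k := by rw [← hQ]; simp
  rw [mul_comm, coeff_mul_X_pow'] at h2
  simpa [Nat.not_le.mpr hk] using h2

/-- Regularity transfers from `R[X]` to `(R[X]/(X^n))[X]`. -/
lemma aux_map_regular {G : R[X]} (hG : G ∈ nonZeroDivisors R[X]) :
    G.map ((Ideal.Quotient.mk (Ideal.span {(X : R[X]) ^ n})).comp C) ∈
      nonZeroDivisors (Polynomial (R[X] ⧸ Ideal.span {(X : R[X]) ^ n})) := by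
  set I := Ideal.span {(X : R[X]) ^ n}
  set π := Ideal.Quotient.mk I
  rw [Polynomial.mem_nonZeroDivisors_iff]
  intro h hsmul
  by_contra h0
  obtain ⟨P, hPmk⟩ := Ideal.Quotient.mk_surjective h
  set P' := P %ₘ (X ^ n : R[X]) with hP'
  have hmonic : (X ^ n : R[X]).Monic := monic_X_pow n
  have hdeg : P'.degree < (X ^ n : R[X]).degree := degree_modByMonic_lt P hmonic
  have hXn0 : π ((X : R[X]) ^ n) = 0 := by
    rw [Ideal.Quotient.eq_zero_iff_mem]
    exact Ideal.subset_span rfl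
  have hmk' : π P' = h := by
    have := modByMonic_add_div P (X ^ n : R[X])
    calc π P' = π (P' + X ^ n * (P /ₘ X ^ n)) := by
          rw [map_add, map_mul, hXn0, zero_mul, add_zero]
      _ = π P := by rw [this]
      _ = h := hPmk
  have hP'0 : P' ≠ 0 := fun e => h0 (by rw [← hmk', e, map_zero])
  have hndeg : P'.natDegree < n := by
    rw [degree_X_pow] at hdeg
    exact (natDegree_lt_iff_degree_lt hP'0).mpr hdeg
  have hbg : ∀ i, P'.leadingCoeff * G.coeff i = 0 := by
    intro i
    have hc : h * π (C (G.coeff i)) = 0 := by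
      have := congrArg (fun p => Polynomial.coeff p i) hsmul
      simpa [coeff_smul, smul_eq_mul] using this
    rw [← hmk', ← map_mul] at hc
    rw [Ideal.Quotient.eq_zero_iff_mem, Ideal.mem_span_singleton] at hc
    obtain ⟨Q, hQ⟩ := hc
    have h3 : (X ^ n * Q).coeff P'.natDegree = 0 := by
      rw [mul_comm, coeff_mul_X_pow']
      simp [Nat.not_le.mpr hndeg]
    rw [leadingCoeff, ← coeff_mul_C, hQ, h3]
  have hsb : P'.leadingCoeff • G = 0 := by
    ext i
    simp [coeff_smul, smul_eq_mul, hbg i]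
  exact (leadingCoeff_ne_zero.mpr hP'0) (Polynomial.mem_nonZeroDivisors_iff.mp hG _ hsb)

end Aux


/-- A commutative ring `S` is an EM-ring if every zero-divisor polynomial in `S[x]`
has an annihilating content. -/
def IsEMRing (S : Type*) [CommRing S] : Prop :=
  ∀ f : S[X], f ∉ nonZeroDivisors S[X] →
    ∃ (c : S) (g : S[X]), c ∉ nonZeroDivisors S ∧ g ∈ nonZeroDivisors S[X] ∧ f = C c * g

/-- If `R` is an EM-ring and `n ≥ 2`, then `H = R[y]/(yⁿ)` with its
`Z_n`-grading `H_k = R·yᵏ` is an EM-`Z_n`-graded ring: every nonzero homogeneous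
zero-divisor polynomial in `H[x]` has an annihilating content. -/
theorem stmt_6 {R : Type*} [CommRing R] (hR : IsEMRing R) (n : ℕ) (hn : 2 ≤ n) :
    ∀ f : Polynomial (R[X] ⧸ Ideal.span {(X : R[X]) ^ n}), f ≠ 0 →
      (∃ k : ZMod n, ∀ i, ∃ a : R,
        f.coeff i = Ideal.Quotient.mk (Ideal.span {(X : R[X]) ^ n}) (C a * X ^ k.val)) →
      f ∉ nonZeroDivisors (Polynomial (R[X] ⧸ Ideal.span {(X : R[X]) ^ n})) →
      ∃ (c : R[X] ⧸ Ideal.span {(X : R[X]) ^ n})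
        (g : Polynomial (R[X] ⧸ Ideal.span {(X : R[X]) ^ n})),
        c ∉ nonZeroDivisors (R[X] ⧸ Ideal.span {(X : R[X]) ^ n}) ∧
        g ∈ nonZeroDivisors (Polynomial (R[X] ⧸ Ideal.span {(X : R[X]) ^ n})) ∧
        f = C c * g := by
  intro f hf0 hhom hfzd
  rcases subsingleton_or_nontrivial R with hS | hN
  · haveI : Subsingleton R[X] := ⟨fun p q => by ext i; exact Subsingleton.elim _ _⟩
    haveI : Subsingleton (R[X] ⧸ Ideal.span {(X : R[X]) ^ n}) :=
      Quotient.instSubsingletonQuotient _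
    haveI : Subsingleton (Polynomial (R[X] ⧸ Ideal.span {(X : R[X]) ^ n})) :=
      ⟨fun p q => by ext i; exact Subsingleton.elim _ _⟩
    exact absurd (Subsingleton.elim f 0) hf0
  obtain ⟨k, hk⟩ := hhom
  haveI : NeZero n := ⟨by omega⟩
  choose a ha using hk
  have hmn : k.val < n := ZMod.val_lt k
  set F : R[X] := ∑ i ∈ f.support, C (a i) * X ^ i with hF
  have hFc' : ∀ i, F.coeff i = if i ∈ f.support then a i else 0 := by
    intro i
    rw [hF, finset_sum_coeff]
    rw [Finset.sum_congr rfl (fun j _ => by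
      rw [coeff_C_mul, coeff_X_pow, mul_ite, mul_one, mul_zero])]
    exact Finset.sum_ite_eq f.support i a
  have hFc : ∀ i, F.coeff i = a i := by
    intro i
    rw [hFc' i]
    split
    · rfl
    · next hi =>
      have h0 : f.coeff i = 0 := notMem_support_iff.mp hi
      exact (aux_mk_eq_zero hmn ((ha i).symm.trans h0)).symm
  have hfc : ∀ i, f.coeff i =
      Ideal.Quotient.mk (Ideal.span {(X : R[X]) ^ n}) (C (F.coeff i) * X ^ k.val) := by
    intro i; rw [hFc i]; exact ha i
  by_cases hFr : F ∈ nonZeroDivisors R[X]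
  · -- F is regular in R[X]; then k.val ≠ 0 and c = π (X^k.val)
    have hg := aux_map_regular (n := n) hFr
    have hmne : k.val ≠ 0 := by
      intro h0
      apply hfzd
      have hfe : f = F.map ((Ideal.Quotient.mk (Ideal.span {(X : R[X]) ^ n})).comp C) := by
        ext i
        rw [coeff_map, hfc i, h0, pow_zero, mul_one]
        rfl
      rw [hfe]
      exact hg
    refine ⟨Ideal.Quotient.mk (Ideal.span {(X : R[X]) ^ n}) (X ^ k.val),
      F.map ((Ideal.Quotient.mk (Ideal.span {(X : R[X]) ^ n})).comp C), ?_, hg, ?_⟩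
    · intro hc
      have h1 : Ideal.Quotient.mk (Ideal.span {(X : R[X]) ^ n}) (X ^ (n - k.val)) *
          Ideal.Quotient.mk (Ideal.span {(X : R[X]) ^ n}) (X ^ k.val) = 0 := by
        rw [← map_mul, ← pow_add]
        have he : n - k.val + k.val = n := by omega
        rw [he, Ideal.Quotient.eq_zero_iff_mem]
        exact Ideal.subset_span rfl
      have h2 := mem_nonZeroDivisors_iff_right.mp hc _ h1
      have h3 : Ideal.Quotient.mk (Ideal.span {(X : R[X]) ^ n})
          (C (1 : R) * X ^ (n - k.val)) = 0 := by rwa [map_one, one_mul]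
      exact one_ne_zero (aux_mk_eq_zero (by omega) h3)
    · ext i
      rw [coeff_C_mul, coeff_map, hfc i]
      show Ideal.Quotient.mk (Ideal.span {(X : R[X]) ^ n}) (C (F.coeff i) * X ^ k.val) =
        Ideal.Quotient.mk (Ideal.span {(X : R[X]) ^ n}) (X ^ k.val) *
          Ideal.Quotient.mk (Ideal.span {(X : R[X]) ^ n}) (C (F.coeff i))
      rw [← map_mul, mul_comm]
  · -- F is a zero divisor; use the EM property of R
    obtain ⟨b, G, hb, hG, hFeq⟩ := hR F hFr
    refine ⟨Ideal.Quotient.mk (Ideal.span {(X : R[X]) ^ n}) (C b * X ^ k.val),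
      G.map ((Ideal.Quotient.mk (Ideal.span {(X : R[X]) ^ n})).comp C), ?_,
      aux_map_regular hG, ?_⟩
    · intro hc
      obtain ⟨r, hrb, hr0⟩ : ∃ r, r * b = 0 ∧ r ≠ 0 := by
        rw [mem_nonZeroDivisors_iff_right] at hb
        push_neg at hb
        exact hb
      have h1 : Ideal.Quotient.mk (Ideal.span {(X : R[X]) ^ n}) (C r) *
          Ideal.Quotient.mk (Ideal.span {(X : R[X]) ^ n}) (C b * X ^ k.val) = 0 := by
        rw [← map_mul, ← mul_assoc, ← C_mul, hrb, C_0, zero_mul, map_zero]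
      have h2 := mem_nonZeroDivisors_iff_right.mp hc _ h1
      have h3 : Ideal.Quotient.mk (Ideal.span {(X : R[X]) ^ n}) (C r * X ^ 0) = 0 := by
        rwa [pow_zero, mul_one]
      exact hr0 (aux_mk_eq_zero (by omega) h3)
    · ext i
      rw [coeff_C_mul, coeff_map, hfc i]
      have hbc : F.coeff i = b * G.coeff i := by rw [hFeq, coeff_C_mul]
      rw [hbc]
      show Ideal.Quotient.mk (Ideal.span {(X : R[X]) ^ n}) (C (b * G.coeff i) * X ^ k.val) =
        Ideal.Quotient.mk (Ideal.span {(X : R[X]) ^ n}) (C b * X ^ k.val) *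
          Ideal.Quotient.mk (Ideal.span {(X : R[X]) ^ n}) (C (G.coeff i))
      rw [← map_mul, C_mul]
      ring_nf
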